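/- arXiv:1407.2036 — 2 statements merged into one kernel-verified Lean document; each statement's English description precedes it below -/
import Mathlib

section
/- Let T be a clique tree of a finite simple graph G, rooted at a node C_r. For any two incomparable nodes C and C' of T, there is no edge of G between a vertex of f(C) and a vertex of f(C'). -/
variable {V : Type*}

/-- The closed neighborhood `N[x]` of a vertex. -/
def closedNbhd (G : SimpleGraph V) (x : V) : Set V := insert x (G.neighborSet x)

/-- `N[S] = ⋃ x ∈ S, N[x]`. -/
def closedNbhdSet (G : SimpleGraph V) (S : Set V) : Set V := ⋃ x ∈ S, closedNbhd G x

/-- `D` is a dominating set: `N[D] = V`. -/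
def IsDomSet (G : SimpleGraph V) (D : Set V) : Prop := closedNbhdSet G D = Set.univ

/-- Minimal dominating set: dominating, and no proper subset dominates. -/
def IsMinDomSet (G : SimpleGraph V) (D : Set V) : Prop :=
  IsDomSet G D ∧ ∀ D' : Set V, D' ⊂ D → ¬ IsDomSet G D'

/-- Private neighbors of `x` with respect to `D`: `P(D,x) = {y : N[y] ∩ D = {x}}`. -/
def privNbrs (G : SimpleGraph V) (D : Set V) (x : V) : Set V :=
  {y | closedNbhd G y ∩ D = {x}}

/-- Irredundant set: every member has a private neighbor. -/
def IsIrredundant (G : SimpleGraph V) (D : Set V) : Prop :=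
  ∀ x ∈ D, (privNbrs G D x).Nonempty

/-- Maximal clique. -/
def IsMaxClique (G : SimpleGraph V) (C : Set V) : Prop :=
  G.IsClique C ∧ ∀ D : Set V, G.IsClique D → C ⊆ D → C = D

/-- The type of maximal cliques of `G`. -/
abbrev MaxClique (G : SimpleGraph V) := {C : Set V // IsMaxClique G C}

/-- A clique tree of `G`, rooted at `root`: a rooted tree whose nodes are exactly the
maximal cliques of `G` (encoded by a parent function from which every node reaches the
root), such that for each vertex `x` the nodes containing `x` induce a connected
subtree of the tree. -/
structure CliqueTree (G : SimpleGraph V) where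
  parent : MaxClique G → MaxClique G
  root : MaxClique G
  parent_root : parent root = root
  reaches_root : ∀ C : MaxClique G, ∃ n : ℕ, parent^[n] C = root
  vertex_subtree : ∀ x : V,
    ((SimpleGraph.fromRel fun C C' : MaxClique G => parent C = C').induce
      {C : MaxClique G | x ∈ C.1}).Connected

variable {G : SimpleGraph V}

open Classical in
/-- `f(C) := C ∖ Pa(C)` for non-root `C`, and `f(C_r) := C_r`. -/
noncomputable def fC (T : CliqueTree G) (C : MaxClique G) : Set V :=
  if C = T.root then C.1 else C.1 \ (T.parent C).1

/-- `IsAnc T A B` : `A` is an ancestor of `B` (i.e. `B ⪯ A`), namely `A` lies on the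
path from the root to `B`. -/
def IsAnc (T : CliqueTree G) (A B : MaxClique G) : Prop :=
  ∃ n : ℕ, T.parent^[n] B = A

/-- `V(C) := ⋃_{C' ⪯ C} f(C')`. -/
noncomputable def Vsub (T : CliqueTree G) (C : MaxClique G) : Set V :=
  ⋃ C' ∈ {C' : MaxClique G | IsAnc T C C'}, fC T C'


lemma exists_maxclique {V : Type*} [Fintype V] (G : SimpleGraph V) {s : Set V}
    (hs : G.IsClique s) : ∃ D : MaxClique G, s ⊆ D.1 := by
  classical
  obtain ⟨D, hD, hmax⟩ := Set.Finite.exists_maximalFor id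
    {t : Set V | G.IsClique t ∧ s ⊆ t} (Set.toFinite _) ⟨s, hs, subset_rfl⟩
  exact ⟨⟨D, hD.1, fun E hE hDE => hDE.antisymm (hmax ⟨hE, hD.2.trans hDE⟩ hDE)⟩, hD.2⟩

lemma walk_anc {V : Type*} {G : SimpleGraph V} (T : CliqueTree G) {x : V}
    {C : MaxClique G} (hpc : x ∉ (T.parent C).1) :
    ∀ (u v : {A : MaxClique G | x ∈ A.1})
      (_ : ((SimpleGraph.fromRel fun A B : MaxClique G => T.parent A = B).induce
        {A : MaxClique G | x ∈ A.1}).Walk u v),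
      IsAnc T C u.1 → IsAnc T C v.1 := by
  intro u v p
  induction p with
  | nil => exact id
  | @cons u w v h p ih =>
    intro hu
    apply ih
    obtain ⟨hne, hrel⟩ := h
    simp only [Function.Embedding.coe_subtype] at hrel
    obtain ⟨n, hn⟩ := hu
    rcases hrel with h1 | h1
    · -- T.parent u.1 = w.1
      cases n with
      | zero =>
        exfalso
        simp only [Function.iterate_zero, id_eq] at hn
        rw [hn] at h1
        rw [h1] at hpc
        exact hpc w.2
      | succ k =>
        refine ⟨k, ?_⟩
        rw [Function.iterate_succ_apply, h1] at hn
        exact hn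
    · -- T.parent w.1 = u.1
      refine ⟨n + 1, ?_⟩
      rw [Function.iterate_succ_apply, h1]
      exact hn

lemma anc_of_mem {V : Type*} [Fintype V] {G : SimpleGraph V} (T : CliqueTree G)
    {x : V} {C D : MaxClique G} (hxC : x ∈ C.1) (hpc : x ∉ (T.parent C).1)
    (hxD : x ∈ D.1) : IsAnc T C D := by
  have hr := (T.vertex_subtree x).preconnected ⟨C, hxC⟩ ⟨D, hxD⟩
  obtain ⟨p⟩ := hr
  exact walk_anc T hpc ⟨C, hxC⟩ ⟨D, hxD⟩ p ⟨0, rfl⟩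

/-- For incomparable nodes `C`, `C'` of the clique tree there is no edge between
`f(C)` and `f(C')`. -/
theorem stmt3 {V : Type*} [Fintype V] (G : SimpleGraph V) (T : CliqueTree G)
    (C C' : MaxClique G) (h1 : ¬ IsAnc T C C') (h2 : ¬ IsAnc T C' C) :
    ∀ x ∈ fC T C, ∀ y ∈ fC T C', ¬ G.Adj x y := by
  intro x hx y hy hadj
  have hCr : C ≠ T.root := by
    rintro rfl
    obtain ⟨n, hn⟩ := T.reaches_root C'
    exact h1 ⟨n, hn⟩
  have hCr' : C' ≠ T.root := by
    rintro rfl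
    obtain ⟨n, hn⟩ := T.reaches_root C
    exact h2 ⟨n, hn⟩
  rw [fC, if_neg hCr] at hx
  rw [fC, if_neg hCr'] at hy
  have hclique : G.IsClique {x, y} := by
    intro a ha b hb hab
    rcases ha with rfl | ha <;> rcases hb with rfl | hb
    · exact absurd rfl hab
    · rw [Set.mem_singleton_iff] at hb; subst hb; exact hadj
    · rw [Set.mem_singleton_iff] at ha; subst ha; exact hadj.symm
    · rw [Set.mem_singleton_iff] at ha hb; subst ha; subst hb; exact absurd rfl hab
  obtain ⟨D, hD⟩ := exists_maxclique G hclique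
  have hxD : x ∈ D.1 := hD (by left; rfl)
  have hyD : y ∈ D.1 := hD (by right; rfl)
  obtain ⟨n, hn⟩ := anc_of_mem T hx.1 hx.2 hxD
  obtain ⟨m, hm⟩ := anc_of_mem T hy.1 hy.2 hyD
  rcases le_total n m with hle | hle
  · apply h2
    refine ⟨m - n, ?_⟩
    rw [← hn, ← Function.iterate_add_apply, Nat.sub_add_cancel hle, hm]
  · apply h1
    refine ⟨n - m, ?_⟩
    rw [← hm, ← Function.iterate_add_apply, Nat.sub_add_cancel hle, hn]
end

section
/- Let T be a clique tree of a finite simple graph G, rooted at a node C_r, and let D be a minimal dominating set of G. Then the top antichain A(D) satisfies: (i) for any two distinct vertices x, y ∈ A(D), the nodes C(x) and C(y) are incomparable (equivalently, x ∉ Up({y}) and y ∉ Up({x})); (ii) for every vertex z ∈ V_G ∖ Up(A(D)), A(D) ∩ (C(z) ∪ Up({z})) ≠ ∅; and (iii) A(D) dominates Up(A(D)), i.e., Up(A(D)) ⊆ N[A(D)]. -/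
variable {V : Type*}

variable {G : SimpleGraph V}

/-- `Up(S)`: vertices `v` such that `C(v)` is a proper ancestor of some node
`C(u)`, `u ∈ S`. -/
def UpS (T : CliqueTree G) (Cx : V → MaxClique G) (S : Set V) : Set V :=
  {v | ∃ u ∈ S, IsAnc T (Cx v) (Cx u) ∧ Cx v ≠ Cx u}

/-- The top antichain `A(S)`: vertices `x ∈ S` with `C(x)` maximal (w.r.t. the
ancestor order) among the nodes `C(u)`, `u ∈ S`. -/
def topAC (T : CliqueTree G) (Cx : V → MaxClique G) (S : Set V) : Set V :=
  {x ∈ S | ∀ u ∈ S, IsAnc T (Cx u) (Cx x) → Cx u = Cx x}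

section Aux

variable (T : CliqueTree G)

lemma isAnc_trans {A B C : MaxClique G} (h1 : IsAnc T A B) (h2 : IsAnc T B C) :
    IsAnc T A C := by
  obtain ⟨m, hm⟩ := h1; obtain ⟨n, hn⟩ := h2
  exact ⟨m + n, by rw [Function.iterate_add_apply, hn, hm]⟩

open Classical in
/-- The depth of a node: the least `n` with `parent^[n] C = root`. -/
noncomputable def depthT (C : MaxClique G) : ℕ :=
  Nat.find (T.reaches_root C)

open Classical in
lemma depthT_spec (C : MaxClique G) : T.parent^[depthT T C] C = T.root :=
  Nat.find_spec (T.reaches_root C)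

lemma depthT_le {C : MaxClique G} {n : ℕ} (h : T.parent^[n] C = T.root) :
    depthT T C ≤ n := by
  classical
  exact Nat.find_min' (T.reaches_root C) h

lemma depthT_root : depthT T T.root = 0 :=
  Nat.le_zero.mp (depthT_le T (by simp))

lemma eq_root_of_depthT_eq_zero {C : MaxClique G} (h : depthT T C = 0) : C = T.root := by
  have := depthT_spec T C; rwa [h] at this

lemma iterate_root (n : ℕ) : T.parent^[n] T.root = T.root :=
  Function.iterate_fixed T.parent_root n

lemma depthT_le_of_anc {W U : MaxClique G} (h : IsAnc T W U) : depthT T W ≤ depthT T U := by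
  obtain ⟨k, hk⟩ := h
  rcases le_or_gt k (depthT T U) with hle | hlt
  · have h1 : T.parent^[depthT T U - k] W = T.root := by
      rw [← hk, ← Function.iterate_add_apply, Nat.sub_add_cancel hle]
      exact depthT_spec T U
    exact le_trans (depthT_le T h1) (Nat.sub_le _ _)
  · have h1 : W = T.root := by
      rw [← hk, show k = (k - depthT T U) + depthT T U by omega,
        Function.iterate_add_apply, depthT_spec, iterate_root]
    rw [h1, depthT_root]; exact Nat.zero_le _

lemma eq_of_anc_of_depthT_le {W U : MaxClique G} (h : IsAnc T W U)
    (hd : depthT T U ≤ depthT T W) : W = U := by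
  obtain ⟨k, hk⟩ := h
  rcases Nat.eq_zero_or_pos k with rfl | hkpos
  · exact hk.symm
  by_cases hU : U = T.root
  · rw [← hk, hU, iterate_root]
  rcases le_or_gt k (depthT T U) with hle | hlt
  · have h1 : T.parent^[depthT T U - k] W = T.root := by
      rw [← hk, ← Function.iterate_add_apply, Nat.sub_add_cancel hle]
      exact depthT_spec T U
    have h2 : depthT T W ≤ depthT T U - k := depthT_le T h1
    have h3 : depthT T U ≠ 0 := fun h0 => hU (eq_root_of_depthT_eq_zero T h0)
    omega
  · have hW : W = T.root := by
      rw [← hk, show k = (k - depthT T U) + depthT T U by omega,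
        Function.iterate_add_apply, depthT_spec, iterate_root]
    rw [hW, depthT_root] at hd
    exact absurd (eq_root_of_depthT_eq_zero T (Nat.le_zero.mp hd)) hU

lemma isAnc_antisymm {A B : MaxClique G} (h1 : IsAnc T A B) (h2 : IsAnc T B A) : A = B :=
  eq_of_anc_of_depthT_le T h1 (depthT_le_of_anc T h2)

lemma isAnc_total {A B C : MaxClique G} (h1 : IsAnc T A C) (h2 : IsAnc T B C) :
    IsAnc T A B ∨ IsAnc T B A := by
  obtain ⟨m, hm⟩ := h1; obtain ⟨n, hn⟩ := h2
  rcases le_or_gt m n with h | h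
  · right
    exact ⟨n - m, by rw [← hm, ← Function.iterate_add_apply, Nat.sub_add_cancel h, hn]⟩
  · left
    exact ⟨m - n, by rw [← hn, ← Function.iterate_add_apply, Nat.sub_add_cancel h.le, hm]⟩

lemma fC_subset (C : MaxClique G) : fC T C ⊆ C.1 := by
  unfold fC; split_ifs
  · exact subset_rfl
  · exact Set.diff_subset

variable {Cx : V → MaxClique G} (hCx : ∀ (v : V) (C : MaxClique G), v ∈ fC T C ↔ C = Cx v)

include hCx

lemma mem_Cx (v : V) : v ∈ (Cx v).1 :=
  fC_subset T (Cx v) ((hCx v (Cx v)).mpr rfl)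

/-- Every node containing `v` is a descendant of `C(v)`. -/
lemma anc_of_mem_s10 {v : V} {C : MaxClique G} (hv : v ∈ C.1) : IsAnc T (Cx v) C := by
  classical
  set S : Set (MaxClique G) := {C : MaxClique G | v ∈ C.1} with hS
  have hCxS : Cx v ∈ S := mem_Cx T hCx v
  obtain ⟨w⟩ := (T.vertex_subtree v).preconnected ⟨Cx v, hCxS⟩ ⟨C, hv⟩
  have key : ∀ {a b : S},
      ((SimpleGraph.fromRel fun C C' : MaxClique G => T.parent C = C').induce S).Walk a b →
      IsAnc T (Cx v) a.1 → IsAnc T (Cx v) b.1 := by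
    intro a b w
    induction w with
    | nil => exact id
    | @cons a c b h p ih =>
      intro ha
      apply ih
      have h' : a.1 ≠ c.1 ∧ (T.parent a.1 = c.1 ∨ T.parent c.1 = a.1) := h
      obtain ⟨n, hn⟩ := ha
      rcases h'.2 with hpc | hpc
      · rcases n with _ | k
        · simp only [Function.iterate_zero_apply] at hn
          by_cases hroot : Cx v = T.root
          · refine ⟨0, ?_⟩
            have : c.1 = T.root := by rw [← hpc, hn, hroot, T.parent_root]
            simp only [Function.iterate_zero_apply, this, hroot]
          · exfalso
            have hf : v ∈ fC T (Cx v) := (hCx v (Cx v)).mpr rfl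
            rw [fC, if_neg hroot] at hf
            exact hf.2 (by rw [← hn, hpc]; exact c.2)
        · refine ⟨k, ?_⟩
          rw [Function.iterate_succ_apply, hpc] at hn
          exact hn
      · exact ⟨n + 1, by rw [Function.iterate_succ_apply, hpc, hn]⟩
  exact key w ⟨0, rfl⟩

/-- If `v` lies in `C` and in the ancestor `parent^[m] C`, it lies in all nodes
in between. -/
lemma mem_of_between {v : V} :
    ∀ (m : ℕ) (C : MaxClique G), v ∈ C.1 → v ∈ (T.parent^[m] C).1 →
      ∀ j ≤ m, v ∈ (T.parent^[j] C).1 := by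
  have step : ∀ (C : MaxClique G), v ∈ C.1 → ∀ m, v ∈ (T.parent^[m + 1] C).1 →
      v ∈ (T.parent C).1 := by
    intro C hvC m hvm
    by_contra hnp
    by_cases hroot : C = T.root
    · rw [hroot, T.parent_root] at hnp; rw [hroot] at hvC; exact hnp hvC
    · have hf : v ∈ fC T C := by rw [fC, if_neg hroot]; exact ⟨hvC, hnp⟩
      have hCeq : C = Cx v := (hCx v C).mp hf
      obtain ⟨k, hk⟩ := anc_of_mem_s10 T hCx hvm
      rw [← Function.iterate_add_apply, ← hCeq] at hk
      have hcyc : ∀ t, T.parent^[(k + (m + 1)) * t] C = C := by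
        intro t
        rw [Function.iterate_mul]
        exact Function.iterate_fixed hk t
      obtain ⟨q, hq⟩ := T.reaches_root C
      have hCroot : C = T.root := by
        rcases Nat.eq_zero_or_pos q with rfl | hqpos
        · exact hq
        · have h1 := hcyc q
          rw [show (k + (m + 1)) * q = ((k + (m + 1)) * q - q) + q by
              have : q ≤ (k + (m + 1)) * q := Nat.le_mul_of_pos_left q (by omega)
              omega,
            Function.iterate_add_apply, hq, iterate_root] at h1
          exact h1.symm
      exact hroot hCroot
  intro m
  induction m with
  | zero =>
    intro C hv _ j hj
    interval_cases j
    simpa using hv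
  | succ m ih =>
    intro C hv hvm j hj
    have hp : v ∈ (T.parent C).1 := step C hv m hvm
    have hvm' : v ∈ (T.parent^[m] (T.parent C)).1 := by
      rwa [Function.iterate_succ_apply] at hvm
    rcases j with _ | j
    · simpa using hv
    · rw [Function.iterate_succ_apply]
      exact ih (T.parent C) hp hvm' j (by omega)

omit hCx in
/-- Existence of a maximal element of `D` above a given one. -/
lemma exists_top {D : Set V} {d : V} (hd : d ∈ D) :
    ∃ a ∈ topAC T Cx D, IsAnc T (Cx a) (Cx d) := by
  classical
  have hne : ∃ n, ∃ u, u ∈ D ∧ IsAnc T (Cx u) (Cx d) ∧ depthT T (Cx u) = n :=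
    ⟨depthT T (Cx d), d, hd, ⟨0, rfl⟩, rfl⟩
  obtain ⟨u, hu, huanc, hudep⟩ := Nat.find_spec hne
  refine ⟨u, ⟨hu, ?_⟩, huanc⟩
  intro w hw hwanc
  have hwd : IsAnc T (Cx w) (Cx d) := isAnc_trans T hwanc huanc
  have h1 : Nat.find hne ≤ depthT T (Cx w) :=
    Nat.find_min' hne ⟨w, hw, hwd, rfl⟩
  have h2 : depthT T (Cx w) ≤ depthT T (Cx u) := depthT_le_of_anc T hwanc
  exact eq_of_anc_of_depthT_le T hwanc (by omega)

omit hCx in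
/-- Any clique extends to a maximal clique (finite case). -/
lemma exists_maxClique_supset [Fintype V] {s : Set V} (hs : G.IsClique s) :
    ∃ C : MaxClique G, s ⊆ C.1 := by
  classical
  have hfin : {t : Set V | G.IsClique t ∧ s ⊆ t}.Finite := Set.toFinite _
  obtain ⟨t, ht, htmax⟩ := Set.Finite.exists_maximalFor id _ hfin ⟨s, hs, subset_rfl⟩
  refine ⟨⟨t, ht.1, fun u hu htu => ?_⟩, ht.2⟩
  exact subset_antisymm htu (htmax ⟨hu, ht.2.trans htu⟩ htu)

omit hCx in
/-- If `x ∈ D` lies (weakly) above `z` which lies strictly above `a ∈ topAC D`,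
contradiction. -/
lemma not_anc_over {D : Set V} {a u z : V} (ha : a ∈ topAC T Cx D) (hu : u ∈ D)
    (h1 : IsAnc T (Cx u) (Cx z)) (h2 : IsAnc T (Cx z) (Cx a)) (hne : Cx z ≠ Cx a) :
    False := by
  have hua : Cx u = Cx a := ha.2 u hu (isAnc_trans T h1 h2)
  rw [hua] at h1
  exact hne (isAnc_antisymm T h2 h1)

end Aux

/-- For a minimal dominating set `D`: (i) distinct `x, y ∈ A(D)` satisfy
`x ∉ Up({y})` and `y ∉ Up({x})` (the nodes `C(x)`, `C(y)` are incomparable);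
(ii) every `z ∉ Up(A(D))` satisfies `A(D) ∩ (C(z) ∪ Up({z})) ≠ ∅`;
(iii) `A(D)` dominates `Up(A(D))`. -/
theorem stmt10 {V : Type*} [Fintype V] (G : SimpleGraph V) (T : CliqueTree G)
    (Cx : V → MaxClique G) (hCx : ∀ (v : V) (C : MaxClique G), v ∈ fC T C ↔ C = Cx v)
    (D : Set V) (hD : IsMinDomSet G D) :
    (∀ x ∈ topAC T Cx D, ∀ y ∈ topAC T Cx D, x ≠ y →
        x ∉ UpS T Cx {y} ∧ y ∉ UpS T Cx {x}) ∧
    (∀ z : V, z ∉ UpS T Cx (topAC T Cx D) →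
        (topAC T Cx D ∩ ((Cx z).1 ∪ UpS T Cx {z})).Nonempty) ∧
    UpS T Cx (topAC T Cx D) ⊆ closedNbhdSet G (topAC T Cx D) := by
  classical
  have hdom : ∀ z : V, ∃ d ∈ D, z ∈ closedNbhd G d := by
    intro z
    have : z ∈ closedNbhdSet G D := by rw [hD.1]; trivial
    simpa [closedNbhdSet, Set.mem_iUnion] using this
  -- membership in a common maximal clique for dominated pairs
  have hcommon : ∀ {d z : V}, G.Adj d z → ∃ C : MaxClique G, d ∈ C.1 ∧ z ∈ C.1 := by
    intro d z hadj
    have hcl : G.IsClique {d, z} := SimpleGraph.isClique_pair.mpr fun _ => hadj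
    obtain ⟨C, hC⟩ := exists_maxClique_supset hcl
    exact ⟨C, hC (by simp), hC (by simp)⟩
  refine ⟨?_, ?_, ?_⟩
  · -- (i)
    intro x hx y hy _
    constructor
    · rintro ⟨u, hu, hanc, hne⟩
      rcases hu with rfl
      exact hne (hy.2 x hx.1 hanc)
    · rintro ⟨u, hu, hanc, hne⟩
      rcases hu with rfl
      exact hne (hx.2 y hy.1 hanc)
  · -- (ii)
    intro z hz
    obtain ⟨d, hd, hzd⟩ := hdom z
    obtain ⟨a, haA, haanc⟩ := exists_top (Cx := Cx) T hd
    -- Cx a and Cx z are comparable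
    have hcomp : IsAnc T (Cx a) (Cx z) ∨ IsAnc T (Cx z) (Cx a) := by
      rcases hzd with rfl | hadj
      · exact Or.inl haanc
      · obtain ⟨C, hdC, hzC⟩ := hcommon hadj
        exact isAnc_total T (isAnc_trans T haanc (anc_of_mem_s10 T hCx hdC))
          (anc_of_mem_s10 T hCx hzC)
    rcases hcomp with hc | hc
    · by_cases heq : Cx a = Cx z
      · exact ⟨a, haA, Or.inl (heq ▸ mem_Cx T hCx a)⟩
      · exact ⟨a, haA, Or.inr ⟨z, rfl, hc, heq⟩⟩
    · by_cases heq : Cx z = Cx a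
      · exact ⟨a, haA, Or.inl (heq ▸ mem_Cx T hCx a)⟩
      · exact absurd ⟨a, haA, hc, heq⟩ hz
  · -- (iii)
    rintro z ⟨a, haA, hanc, hne⟩
    -- choose d ∈ D dominating z of minimal depth
    have hne' : ∃ n, ∃ d, d ∈ D ∧ z ∈ closedNbhd G d ∧ depthT T (Cx d) = n := by
      obtain ⟨d, hd, hzd⟩ := hdom z
      exact ⟨depthT T (Cx d), d, hd, hzd, rfl⟩
    obtain ⟨d, hd, hzd, hddep⟩ := Nat.find_spec hne'
    -- z ≠ d, in fact z is adjacent to d, from strictly above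
    have hadj : G.Adj d z := by
      rcases Set.mem_insert_iff.mp hzd with rfl | h
      · exact (not_anc_over T haA hd ⟨0, rfl⟩ hanc hne).elim
      · exact h
    obtain ⟨C, hdC, hzC⟩ := hcommon hadj
    obtain ⟨m, hm⟩ := anc_of_mem_s10 T hCx hdC
    -- Cx z is a (strict) ancestor of Cx d
    have hzdanc : IsAnc T (Cx z) (Cx d) := by
      rcases isAnc_total T (anc_of_mem_s10 T hCx hdC) (anc_of_mem_s10 T hCx hzC) with h | h
      · exact (not_anc_over T haA hd h hanc hne).elim
      · exact h
    obtain ⟨n, hn⟩ := hzdanc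
    -- z belongs to Cx d and to every node between Cx d and Cx z
    have hzbetween : ∀ j ≤ n, z ∈ (T.parent^[m + j] C).1 := by
      intro j hj
      have hz2 : z ∈ (T.parent^[m + n] C).1 := by
        rw [add_comm m n, Function.iterate_add_apply, hm, hn]
        exact mem_Cx T hCx z
      exact mem_of_between T hCx (m + n) C hzC hz2 (m + j) (by omega)
    -- show d ∈ topAC
    have hdtop : d ∈ topAC T Cx D := by
      refine ⟨hd, fun u hu huanc => ?_⟩
      obtain ⟨j, hj⟩ := huanc
      -- compare Cx u with Cx z
      rcases le_or_gt n j with hle | hlt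
      · -- Cx u weakly above Cx z : contradiction via not_anc_over
        have huz : IsAnc T (Cx u) (Cx z) := by
          refine ⟨j - n, ?_⟩
          rw [← hn, ← Function.iterate_add_apply, Nat.sub_add_cancel hle, hj]
        exact (not_anc_over T haA hu huz hanc hne).elim
      · -- Cx u strictly between Cx d and Cx z, so z ∈ Cx u, so u dominates z
        have hzu : z ∈ (Cx u).1 := by
          have := hzbetween j hlt.le
          rwa [add_comm m j, Function.iterate_add_apply, hm, hj] at this
        have hzu' : z ∈ closedNbhd G u := by
          by_cases hzequ : z = u
          · exact Set.mem_insert_iff.mpr (Or.inl hzequ)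
          · refine Set.mem_insert_iff.mpr (Or.inr ?_)
            exact (Cx u).2.1 (mem_Cx T hCx u) hzu (Ne.symm hzequ)
        have h1 : Nat.find hne' ≤ depthT T (Cx u) :=
          Nat.find_min' hne' ⟨u, hu, hzu', rfl⟩
        have h2 : depthT T (Cx u) ≤ depthT T (Cx d) := depthT_le_of_anc T ⟨j, hj⟩
        exact eq_of_anc_of_depthT_le T ⟨j, hj⟩ (by omega)
    -- conclude
    have : z ∈ closedNbhd G d := hzd
    exact Set.mem_biUnion hdtop this
end
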